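/- arXiv:1904.09026 — 4 statements merged into one kernel-verified Lean document; each statement's English description precedes it below -/
import Mathlib

section
/- Let γ : ℕ → ℝ with γ(n) > 0 for all n and γ(0) = 1. If λ is a complex number with |λ| = 1, 0 < r < 1, and ∑_{n≥1} γ(n) r^{2n} = ∑_{n≥1} γ(n) Re(conj(λ)^n) r^{2n} (both series converging), then λ = 1. -/
open Complex

/-- If `γ n > 0`, `γ 0 = 1`, `|λ| = 1`, `0 < r < 1` and
`∑_{n≥1} γ(n) r^{2n} = ∑_{n≥1} γ(n) Re(conj(λ)^n) r^{2n}` (both converging), then `λ = 1`. -/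
theorem stmt0 (γ : ℕ → ℝ) (hpos : ∀ n, 0 < γ n) (hγ0 : γ 0 = 1)
    (l : ℂ) (hl : ‖l‖ = 1) (r : ℝ) (hr0 : 0 < r) (hr1 : r < 1)
    (h1 : Summable (fun n : ℕ => γ (n + 1) * r ^ (2 * (n + 1))))
    (h2 : Summable (fun n : ℕ => γ (n + 1) * (((starRingEnd ℂ) l) ^ (n + 1)).re * r ^ (2 * (n + 1))))
    (heq : ∑' n : ℕ, γ (n + 1) * r ^ (2 * (n + 1))
         = ∑' n : ℕ, γ (n + 1) * (((starRingEnd ℂ) l) ^ (n + 1)).re * r ^ (2 * (n + 1))) :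
    l = 1 := by
  have habs : ∀ n : ℕ, ‖(starRingEnd ℂ) l ^ n‖ = 1 := by
    intro n
    rw [norm_pow, Complex.norm_conj, hl, one_pow]
  have hle : ∀ n : ℕ,
      γ (n + 1) * (((starRingEnd ℂ) l) ^ (n + 1)).re * r ^ (2 * (n + 1))
        ≤ γ (n + 1) * r ^ (2 * (n + 1)) := by
    intro n
    have hre : (((starRingEnd ℂ) l) ^ (n + 1)).re ≤ 1 := by
      have := Complex.re_le_norm (((starRingEnd ℂ) l) ^ (n + 1))
      rw [habs] at this; exact this
    have : γ (n + 1) * (((starRingEnd ℂ) l) ^ (n + 1)).re ≤ γ (n + 1) * 1 :=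
      mul_le_mul_of_nonneg_left hre (hpos _).le
    calc γ (n + 1) * (((starRingEnd ℂ) l) ^ (n + 1)).re * r ^ (2 * (n + 1))
        ≤ γ (n + 1) * 1 * r ^ (2 * (n + 1)) :=
          mul_le_mul_of_nonneg_right this (by positivity)
      _ = γ (n + 1) * r ^ (2 * (n + 1)) := by ring
  have hre0 : (((starRingEnd ℂ) l) ^ 1).re = 1 := by
    by_contra hne
    have hlt : (((starRingEnd ℂ) l) ^ 1).re < 1 := by
      have := Complex.re_le_norm (((starRingEnd ℂ) l) ^ 1)
      rw [habs] at this
      exact lt_of_le_of_ne this hne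
    have hlt0 : γ (0 + 1) * (((starRingEnd ℂ) l) ^ (0 + 1)).re * r ^ (2 * (0 + 1))
        < γ (0 + 1) * r ^ (2 * (0 + 1)) := by
      have : γ 1 * (((starRingEnd ℂ) l) ^ 1).re < γ 1 * 1 :=
        mul_lt_mul_of_pos_left hlt (hpos 1)
      have := mul_lt_mul_of_pos_right this (pow_pos hr0 (2 * 1))
      simpa using this
    have := Summable.tsum_lt_tsum (f := fun n : ℕ => γ (n + 1) * (((starRingEnd ℂ) l) ^ (n + 1)).re * r ^ (2 * (n + 1)))
      (g := fun n : ℕ => γ (n + 1) * r ^ (2 * (n + 1))) (i := 0) hle hlt0 h2 h1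
    exact absurd heq (by linarith)
  rw [pow_one] at hre0
  have hre : l.re = 1 := by simpa using hre0
  have him : l.im = 0 := by
    have := Complex.sq_norm l
    rw [hl, Complex.normSq_apply, hre] at this
    nlinarith
  exact Complex.ext hre him
end

section
/- Let a ∈ 𝔻, a ≠ 0, and λ with |λ| = 1. For every b ∈ [0, |a|] there exists τ with |τ| = 1 such that |conj(τ)·a·(λτ − 1)/(λτ − |a|²)| = b. -/
open Complex

/-- For `a ∈ 𝔻 \ {0}`, `|λ| = 1`, and every `b ∈ [0, |a|]` there is a unimodular `τ` with
`|conj(τ)·a·(λτ − 1)/(λτ − |a|²)| = b`. -/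
theorem stmt8 (a l : ℂ) (ha : ‖a‖ < 1) (ha0 : a ≠ 0) (hl : ‖l‖ = 1) :
    ∀ b ∈ Set.Icc (0 : ℝ) (‖a‖), ∃ τ : ℂ, ‖τ‖ = 1 ∧
      ‖((starRingEnd ℂ) τ * a * (l * τ - 1)
        / (l * τ - ((‖a‖ : ℝ) ^ 2 : ℝ)))‖ = b := by
  intro b hb
  set r : ℝ := ‖a‖ with hr
  have hr0 : 0 < r := norm_pos_iff.mpr ha0
  have hr1 : r < 1 := ha
  have hden : ∀ θ : ℝ, Complex.exp (θ * I) - ((r ^ 2 : ℝ) : ℂ) ≠ 0 := by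
    intro θ h
    have habs : ‖Complex.exp (θ * I)‖ = 1 := Complex.norm_exp_ofReal_mul_I θ
    have h2 : Complex.exp (θ * I) = ((r ^ 2 : ℝ) : ℂ) := sub_eq_zero.mp h
    rw [h2, Complex.norm_real, Real.norm_eq_abs, _root_.abs_of_nonneg (sq_nonneg r)] at habs
    nlinarith
  set f : ℝ → ℝ := fun θ =>
    ‖a * (Complex.exp (θ * I) - 1) / (Complex.exp (θ * I) - ((r ^ 2 : ℝ) : ℂ))‖
    with hf_def
  have hf : ContinuousOn f (Set.Icc 0 Real.pi) := by
    apply Continuous.continuousOn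
    apply continuous_norm.comp
    apply Continuous.div
    · exact (continuous_const.mul (((continuous_ofReal.mul continuous_const).cexp).sub
        continuous_const))
    · exact ((continuous_ofReal.mul continuous_const).cexp).sub continuous_const
    · exact hden
  have h0 : f 0 = 0 := by simp [hf_def]
  have hπb : b ≤ f Real.pi := by
    have he : Complex.exp ((Real.pi : ℂ) * I) = -1 := Complex.exp_pi_mul_I
    have : f Real.pi = r * 2 / (1 + r ^ 2) := by
      simp only [hf_def, he]
      rw [norm_div, norm_mul]
      have h1 : ‖((-1 : ℂ) - 1)‖ = 2 := by norm_num
      have h2 : ‖((-1 : ℂ) - ((r ^ 2 : ℝ) : ℂ))‖ = 1 + r ^ 2 := by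
        rw [show ((-1 : ℂ) - ((r ^ 2 : ℝ) : ℂ)) = ((-(1 + r ^ 2) : ℝ) : ℂ) by push_cast; ring]
        rw [Complex.norm_real, Real.norm_eq_abs, abs_neg, _root_.abs_of_nonneg (by positivity)]
      rw [h1, h2, ← hr]
    rw [this]
    have hb2 : b ≤ r := hb.2
    rw [le_div_iff₀ (by positivity)]
    nlinarith
  obtain ⟨θ, hθmem, hθ⟩ := intermediate_value_Icc Real.pi_pos.le hf ⟨h0.trans_le hb.1, hπb⟩
  refine ⟨(starRingEnd ℂ) l * Complex.exp (θ * I), ?_, ?_⟩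
  · rw [norm_mul, Complex.norm_conj, hl, Complex.norm_exp_ofReal_mul_I, one_mul]
  · have hll : l * (starRingEnd ℂ) l = 1 := by
      rw [Complex.mul_conj, ← Complex.sq_norm, hl]; norm_num
    have hlt : l * ((starRingEnd ℂ) l * Complex.exp (θ * I)) = Complex.exp (θ * I) := by
      rw [← mul_assoc, hll, one_mul]
    rw [hlt]
    rw [norm_div, norm_mul, norm_mul, Complex.norm_conj, norm_mul, Complex.norm_conj, hl,
      Complex.norm_exp_ofReal_mul_I, one_mul, one_mul]
    have := hθ
    simp only [hf_def] at this
    rw [norm_div, norm_mul] at this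
    exact this
end

section
/- Let γ(n) > 0, γ(0) = 1, with K(z,w) = ∑ γ(n)(conj(w)z)^n convergent on 𝔻 × 𝔻. If analytic functions F : 𝔻 → ℂ and φ : 𝔻 → 𝔻 satisfy F(z)conj(F(w))K(φ(z),φ(w)) = K(z,w) for all z, w ∈ 𝔻, then φ is injective on 𝔻. -/
open Complex Metric

/-- If `K(z,w) = ∑ γ(n)(conj(w)z)^n` with `γ > 0`, `γ(0) = 1`, converges on `𝔻 × 𝔻`, and
analytic `F`, analytic self-map `φ` of `𝔻` satisfy `F(z)conj(F(w))K(φ(z),φ(w)) = K(z,w)`,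
then `φ` is injective on `𝔻`. -/
theorem stmt11 (γ : ℕ → ℝ) (hpos : ∀ n, 0 < γ n) (hγ0 : γ 0 = 1)
    (F φ : ℂ → ℂ)
    (hF : DifferentiableOn ℂ F (ball (0 : ℂ) 1))
    (hφd : DifferentiableOn ℂ φ (ball (0 : ℂ) 1))
    (hφm : Set.MapsTo φ (ball (0 : ℂ) 1) (ball (0 : ℂ) 1))
    (hK : ∀ z ∈ ball (0 : ℂ) 1, ∀ w ∈ ball (0 : ℂ) 1,
      Summable (fun n : ℕ => ((γ n : ℝ) : ℂ) * ((starRingEnd ℂ) w * z) ^ n))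
    (heq : ∀ z ∈ ball (0 : ℂ) 1, ∀ w ∈ ball (0 : ℂ) 1,
      F z * (starRingEnd ℂ) (F w)
          * (∑' n : ℕ, ((γ n : ℝ) : ℂ) * ((starRingEnd ℂ) (φ w) * φ z) ^ n)
        = ∑' n : ℕ, ((γ n : ℝ) : ℂ) * ((starRingEnd ℂ) w * z) ^ n) :
    Set.InjOn φ (ball (0 : ℂ) 1) := by
  intro a ha b hb hab
  have h0 : (0 : ℂ) ∈ ball (0 : ℂ) 1 := by simp
  -- K(z, 0) = 1 for every z
  have hK0 : ∀ z : ℂ,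
      (∑' n : ℕ, ((γ n : ℝ) : ℂ) * ((starRingEnd ℂ) (0 : ℂ) * z) ^ n) = 1 := by
    intro z
    have : (starRingEnd ℂ) (0 : ℂ) * z = 0 := by simp
    rw [this]
    rw [tsum_eq_single 0 (by intro n hn; simp [zero_pow hn])]
    simp [hγ0]
  -- From w = 0 : F a = F b
  have ha0 := heq a ha 0 h0
  have hb0 := heq b hb 0 h0
  rw [hK0, hab] at ha0
  rw [hK0] at hb0
  have hFab : F a = F b := by
    have hY : (starRingEnd ℂ) (F 0)
        * (∑' n : ℕ, ((γ n : ℝ) : ℂ) * ((starRingEnd ℂ) (φ 0) * φ b) ^ n) ≠ 0 := by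
      intro h
      rw [mul_assoc, h, mul_zero] at ha0
      exact one_ne_zero ha0.symm
    apply mul_right_cancel₀ hY
    rw [← mul_assoc, ← mul_assoc, ha0, hb0]
  -- Hence K(a, w) = K(b, w) for all w in the ball
  have hKw : ∀ w ∈ ball (0 : ℂ) 1,
      (∑' n : ℕ, ((γ n : ℝ) : ℂ) * ((starRingEnd ℂ) w * a) ^ n)
        = ∑' n : ℕ, ((γ n : ℝ) : ℂ) * ((starRingEnd ℂ) w * b) ^ n := by
    intro w hw
    rw [← heq a ha w hw, ← heq b hb w hw, hab, hFab]
  -- Specialize to w = a and w = b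
  have haa := hKw a ha
  have hbb := hKw b hb
  -- the combination
  set g : ℕ → ℂ := fun n =>
    ((γ n : ℝ) : ℂ) * ((starRingEnd ℂ) a * a) ^ n
      + ((γ n : ℝ) : ℂ) * ((starRingEnd ℂ) b * b) ^ n
      - ((γ n : ℝ) : ℂ) * ((starRingEnd ℂ) a * b) ^ n
      - ((γ n : ℝ) : ℂ) * ((starRingEnd ℂ) b * a) ^ n with hgdef
  have S1 := hK a ha a ha
  have S2 := hK b hb b hb
  have S3 := hK b hb a ha
  have S4 := hK a ha b hb
  have hg : Summable g := ((S1.add S2).sub S3).sub S4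
  have htg : (∑' n, g n) = 0 := by
    rw [hgdef]
    rw [Summable.tsum_sub ((S1.add S2).sub S3) S4, Summable.tsum_sub (S1.add S2) S3, Summable.tsum_add S1 S2,
      haa, hbb]
    ring
  -- pass to real parts
  have hgre : Summable fun n => (g n).re :=
    hg.map Complex.reAddGroupHom Complex.continuous_re
  have htgre : (∑' n, (g n).re) = 0 := by
    rw [← Complex.re_tsum hg, htg]; rfl
  -- formula for real parts
  have hre_eq : ∀ n, (g n).re
      = γ n * (normSq a ^ n + normSq b ^ n - 2 * (((starRingEnd ℂ) a * b) ^ n).re) := by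
    intro n
    have e1 : (starRingEnd ℂ) a * a = ((normSq a : ℝ) : ℂ) := by
      rw [mul_comm, Complex.mul_conj]
    have e2 : (starRingEnd ℂ) b * b = ((normSq b : ℝ) : ℂ) := by
      rw [mul_comm, Complex.mul_conj]
    have e3 : (starRingEnd ℂ) b * a = (starRingEnd ℂ) ((starRingEnd ℂ) a * b) := by
      rw [map_mul, Complex.conj_conj]; ring
    rw [hgdef]
    simp only [e1, e2, e3, ← Complex.ofReal_pow, ← map_pow,
      Complex.sub_re, Complex.add_re, Complex.re_ofReal_mul, Complex.ofReal_re,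
      Complex.conj_re]
    ring
  -- each real part is nonnegative
  have hre_nonneg : ∀ n, 0 ≤ (g n).re := by
    intro n
    rw [hre_eq n]
    have h1 : (((starRingEnd ℂ) a * b) ^ n).re ≤ ‖a‖ ^ n * ‖b‖ ^ n := by
      calc (((starRingEnd ℂ) a * b) ^ n).re ≤ ‖((starRingEnd ℂ) a * b) ^ n‖ :=
            Complex.re_le_norm _
        _ = ‖a‖ ^ n * ‖b‖ ^ n := by
            rw [norm_pow, norm_mul, Complex.norm_conj, mul_pow]
    have h2 : normSq a ^ n = (‖a‖ ^ n) ^ 2 := by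
      rw [← Complex.sq_norm, ← pow_mul, ← pow_mul, Nat.mul_comm]
    have h3 : normSq b ^ n = (‖b‖ ^ n) ^ 2 := by
      rw [← Complex.sq_norm, ← pow_mul, ← pow_mul, Nat.mul_comm]
    have := (hpos n).le
    nlinarith [sq_nonneg (‖a‖ ^ n - ‖b‖ ^ n)]
  -- hence the first term vanishes
  have h1le : (g 1).re ≤ 0 := by
    rw [← htgre]
    exact Summable.le_tsum hgre 1 (fun j _ => hre_nonneg j)
  have h1eq : (g 1).re = 0 := le_antisymm h1le (hre_nonneg 1)
  have hns : normSq (a - b) = 0 := by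
    have := hre_eq 1
    rw [h1eq] at this
    have h2 : normSq a + normSq b - 2 * ((starRingEnd ℂ) a * b).re = normSq (a - b) := by
      rw [Complex.normSq_sub]
      have : (a * (starRingEnd ℂ) b).re = ((starRingEnd ℂ) a * b).re := by
        rw [← Complex.conj_re (a * (starRingEnd ℂ) b), map_mul, Complex.conj_conj, mul_comm]
      rw [this]
    simp only [pow_one] at this
    rw [h2] at this
    have hγ1 := hpos 1
    nlinarith [this]
  have : a - b = 0 := by
    rwa [Complex.normSq_eq_zero] at hns
  exact sub_eq_zero.mp this
end

section
/- Let K(z,w) = ∑_{n≥0} γ(n)(conj(w)z)^n with γ(n) > 0, γ(0) = 1, and assume ∑_{n≥0} γ(n) < ∞. Suppose analytic F : 𝔻 → ℂ and analytic φ : 𝔻 → 𝔻 satisfy F(z)conj(F(w))K(φ(z),φ(w)) = K(z,w) for all z, w ∈ 𝔻 and F is bounded on 𝔻. Then F is a constant of modulus one and φ(z) = λz for some constant λ with |λ| = 1. -/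
open Complex Metric

noncomputable def Ks (γ : ℕ → ℝ) (t : ℝ) : ℝ := ∑' n, γ n * t ^ n

lemma Ks_summable {γ : ℕ → ℝ} (hpos : ∀ n, 0 < γ n) (hγsum : Summable γ)
    {t : ℝ} (h0 : 0 ≤ t) (h1 : t ≤ 1) : Summable (fun n => γ n * t ^ n) := by
  refine Summable.of_nonneg_of_le (fun n => mul_nonneg (hpos n).le (pow_nonneg h0 n)) (fun n => ?_) hγsum
  have h := pow_le_one₀ h0 h1 (n := n)
  nlinarith [(hpos n).le, pow_nonneg h0 n]

lemma Ks_zero {γ : ℕ → ℝ} (hγ0 : γ 0 = 1) : Ks γ 0 = 1 := by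
  unfold Ks
  rw [tsum_eq_single 0 (fun n hn => by simp [zero_pow hn])]
  simp [hγ0]

lemma Ks_one_le {γ : ℕ → ℝ} (hpos : ∀ n, 0 < γ n) (hγsum : Summable γ) (hγ0 : γ 0 = 1)
    {t : ℝ} (h0 : 0 ≤ t) (h1 : t ≤ 1) : 1 ≤ Ks γ t := by
  have := Summable.le_tsum (Ks_summable hpos hγsum h0 h1) 0 (fun j _ => mul_nonneg (hpos j).le (pow_nonneg h0 j))
  simpa [hγ0, Ks] using this

lemma Ks_le_S {γ : ℕ → ℝ} (hpos : ∀ n, 0 < γ n) (hγsum : Summable γ)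
    {t : ℝ} (h0 : 0 ≤ t) (h1 : t ≤ 1) : Ks γ t ≤ ∑' n, γ n := by
  refine Summable.tsum_le_tsum (fun n => ?_) (Ks_summable hpos hγsum h0 h1) hγsum
  have h := pow_le_one₀ h0 h1 (n := n)
  nlinarith [(hpos n).le, pow_nonneg h0 n]

lemma Ks_mono {γ : ℕ → ℝ} (hpos : ∀ n, 0 < γ n) (hγsum : Summable γ)
    {t t' : ℝ} (h0 : 0 ≤ t) (htt' : t ≤ t') (h1 : t' ≤ 1) : Ks γ t ≤ Ks γ t' := by
  refine Summable.tsum_le_tsum (fun n => ?_) (Ks_summable hpos hγsum h0 (htt'.trans h1))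
    (Ks_summable hpos hγsum (h0.trans htt') h1)
  exact mul_le_mul_of_nonneg_left (pow_le_pow_left₀ h0 htt' n) (hpos n).le

lemma Ks_strict {γ : ℕ → ℝ} (hpos : ∀ n, 0 < γ n) (hγsum : Summable γ)
    {t t' : ℝ} (h0 : 0 ≤ t) (htt' : t < t') (h1 : t' ≤ 1) : Ks γ t < Ks γ t' := by
  refine Summable.tsum_lt_tsum_of_nonneg (i := 1) (fun n => mul_nonneg (hpos n).le (pow_nonneg h0 n))
    (fun n => mul_le_mul_of_nonneg_left (pow_le_pow_left₀ h0 htt'.le n) (hpos n).le) ?_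
    (Ks_summable hpos hγsum (h0.trans htt'.le) h1)
  simpa using mul_lt_mul_of_pos_left htt' (hpos 1)

lemma Ks_big {γ : ℕ → ℝ} (hpos : ∀ n, 0 < γ n) (hγsum : Summable γ) (hγ0 : γ 0 = 1)
    {c : ℝ} (hc : c < ∑' n, γ n) : ∃ t₁, 0 ≤ t₁ ∧ t₁ < 1 ∧ c < Ks γ t₁ := by
  by_cases hc1 : c < 1
  · exact ⟨0, le_rfl, one_pos, by rw [Ks_zero hγ0]; exact hc1⟩
  push_neg at hc1
  obtain ⟨N, hN⟩ := ((hγsum.hasSum.tendsto_sum_nat).eventually (eventually_gt_nhds hc)).exists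
  set P := ∑ i ∈ Finset.range N, γ i with hPdef
  have hcpos : (0:ℝ) < c := lt_of_lt_of_le one_pos hc1
  have hP : c < P := hN
  have hPpos : 0 < P := hcpos.trans hP
  have hNpos : 0 < (N : ℝ) := by
    rcases Nat.eq_zero_or_pos N with h | h
    · exfalso; rw [h] at hPdef; simp [hPdef] at hP; linarith
    · exact_mod_cast h
  set δ := (P - c) / (2 * N * P) with hδdef
  have hδpos : 0 < δ := by
    apply div_pos (by linarith) (by positivity)
  have hδhalf : δ < 1 / (2 * N) := by
    rw [hδdef, div_lt_div_iff₀ (by positivity) (by positivity)]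
    nlinarith
  set t₁ := 1 - δ with ht₁def
  have hN1 : (1:ℝ) ≤ N := by exact_mod_cast Nat.one_le_iff_ne_zero.2 (by
    intro h; rw [h] at hPdef; simp [hPdef] at hP; linarith)
  have ht₁0 : 0 ≤ t₁ := by
    have h2N : (2:ℝ) ≤ 2 * N := by linarith
    have : δ ≤ 1/2 := le_trans hδhalf.le (one_div_le_one_div_of_le (by norm_num) h2N)
    linarith
  have ht₁1 : t₁ < 1 := by simp [ht₁def]; linarith
  refine ⟨t₁, ht₁0, ht₁1, ?_⟩
  have hbern : 1 - (N:ℝ) * δ ≤ t₁ ^ N := by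
    have := one_add_mul_le_pow (a := t₁ - 1) (by linarith) N
    have h1 : (1 : ℝ) + N * (t₁ - 1) = 1 - N * δ := by rw [ht₁def]; ring
    have h2 : (1 + (t₁ - 1)) = t₁ := by ring
    rw [h1, h2] at this
    exact this
  have hNδ : (N:ℝ) * δ = (P - c)/(2*P) := by
    rw [hδdef]; field_simp
  have key1 : P * (1 - (N:ℝ)*δ) ≤ P * t₁ ^ N := by
    exact mul_le_mul_of_nonneg_left hbern hPpos.le
  have key2 : c < P * (1 - (N:ℝ)*δ) := by
    rw [hNδ]
    have : P * (1 - (P - c)/(2*P)) = (P + c)/2 := by field_simp; ring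
    rw [this]; linarith
  have key3 : P * t₁ ^ N ≤ ∑ i ∈ Finset.range N, γ i * t₁ ^ i := by
    rw [hPdef, Finset.sum_mul]
    refine Finset.sum_le_sum (fun i hi => ?_)
    have hiN : i ≤ N := (Finset.mem_range.1 hi).le
    exact mul_le_mul_of_nonneg_left (pow_le_pow_of_le_one ht₁0 ht₁1.le hiN) (hpos i).le
  have key4 : ∑ i ∈ Finset.range N, γ i * t₁ ^ i ≤ Ks γ t₁ :=
    Summable.sum_le_tsum (Finset.range N) (fun i _ => mul_nonneg (hpos i).le (pow_nonneg ht₁0 i))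
      (Ks_summable hpos hγsum ht₁0 ht₁1.le)
  linarith

/-- Kernel bounded on the diagonal (`∑ γ(n) < ∞`): if bounded analytic `F` and analytic
self-map `φ` of `𝔻` satisfy `F(z)conj(F(w))K(φ(z),φ(w)) = K(z,w)`, then `F` is a unimodular
constant and `φ` is a rotation. -/
theorem stmt12 (γ : ℕ → ℝ) (hpos : ∀ n, 0 < γ n) (hγ0 : γ 0 = 1)
    (hγsum : Summable γ)
    (F φ : ℂ → ℂ)
    (hF : DifferentiableOn ℂ F (ball (0 : ℂ) 1))
    (hFbdd : ∃ M : ℝ, ∀ z ∈ ball (0 : ℂ) 1, ‖F z‖ ≤ M)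
    (hφd : DifferentiableOn ℂ φ (ball (0 : ℂ) 1))
    (hφm : Set.MapsTo φ (ball (0 : ℂ) 1) (ball (0 : ℂ) 1))
    (heq : ∀ z ∈ ball (0 : ℂ) 1, ∀ w ∈ ball (0 : ℂ) 1,
      F z * (starRingEnd ℂ) (F w)
          * (∑' n : ℕ, ((γ n : ℝ) : ℂ) * ((starRingEnd ℂ) (φ w) * φ z) ^ n)
        = ∑' n : ℕ, ((γ n : ℝ) : ℂ) * ((starRingEnd ℂ) w * z) ^ n) :
    (∃ c : ℂ, ‖c‖ = 1 ∧ ∀ z ∈ ball (0 : ℂ) 1, F z = c)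
    ∧ (∃ l : ℂ, ‖l‖ = 1 ∧ ∀ z ∈ ball (0 : ℂ) 1, φ z = l * z) := by
  set S := ∑' n, γ n with hSdef
  -- membership facts
  have hns : ∀ z : ℂ, z ∈ ball (0:ℂ) 1 → normSq z < 1 := by
    intro z hz
    have h1 : ‖z‖ < 1 := by
      have := mem_ball_zero_iff.1 hz
      exact this
    rw [Complex.normSq_eq_norm_sq]
    nlinarith [norm_nonneg z]
  -- the diagonal identity, in real form
  have e1 : ∀ u : ℂ, (∑' n : ℕ, ((γ n : ℝ) : ℂ) * ((starRingEnd ℂ) u * u) ^ n)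
      = ((Ks γ (normSq u) : ℝ) : ℂ) := by
    intro u
    rw [Ks, Complex.ofReal_tsum]
    refine tsum_congr fun n => ?_
    rw [← Complex.normSq_eq_conj_mul_self]
    push_cast
    ring
  have diag : ∀ z ∈ ball (0:ℂ) 1,
      normSq (F z) * Ks γ (normSq (φ z)) = Ks γ (normSq z) := by
    intro z hz
    have h := heq z hz z hz
    rw [e1, e1, Complex.mul_conj] at h
    exact_mod_cast h
  have hKpos : ∀ t : ℝ, 0 ≤ t → t ≤ 1 → 0 < Ks γ t := fun t h0 h1 =>
    lt_of_lt_of_le one_pos (Ks_one_le hpos hγsum hγ0 h0 h1)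
  have hFne : ∀ z ∈ ball (0:ℂ) 1, F z ≠ 0 := by
    intro z hz hFz
    have h := diag z hz
    rw [hFz] at h
    simp at h
    have := hKpos (normSq z) (normSq_nonneg z) (hns z hz).le
    linarith
  set g : ℂ → ℂ := fun z => (F z)⁻¹ with hgdef
  have hg : DifferentiableOn ℂ g (ball (0:ℂ) 1) := hF.inv hFne
  have hgnorm : ∀ z ∈ ball (0:ℂ) 1, ‖g z‖^2 = (normSq (F z))⁻¹ := by
    intro z hz
    rw [hgdef]
    simp only [norm_inv]
    rw [Complex.normSq_eq_norm_sq]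
    rw [inv_pow]
  have hS1 : (1:ℝ) ≤ S := by
    have := Summable.le_tsum hγsum 0 (fun j _ => (hpos j).le)
    rw [hγ0] at this; exact this
  -- main claim: ‖F 0‖ ≥ 1
  have claim : ∀ c : ℝ, 0 < c → c < S → c ≤ S * normSq (F 0) := by
    intro c hc0 hcS
    obtain ⟨t₁, ht₁0, ht₁1, hct₁⟩ := Ks_big hpos hγsum hγ0 hcS
    set r := (1 + t₁)/2 with hrdef
    have hr0 : 0 < r := by rw [hrdef]; linarith
    have hr1 : r < 1 := by rw [hrdef]; linarith
    have hrsq : t₁ ≤ r^2 := by nlinarith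
    have hrsq1 : r^2 < 1 := by nlinarith
    have hKr : c < Ks γ (r^2) :=
      lt_of_lt_of_le hct₁ (Ks_mono hpos hγsum ht₁0 hrsq hrsq1.le)
    have hKrpos : 0 < Ks γ (r^2) := hc0.trans hKr
    set C := Real.sqrt (S / Ks γ (r^2)) with hCdef
    have hsphere : ∀ z ∈ sphere (0:ℂ) r, ‖g z‖ ≤ C := by
      intro z hz
      have hznorm : ‖z‖ = r := mem_sphere_zero_iff_norm.1 hz
      have hzball : z ∈ ball (0:ℂ) 1 := by
        rw [mem_ball_zero_iff, hznorm]; exact hr1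
      have hnsz : normSq z = r^2 := by
        rw [Complex.normSq_eq_norm_sq, hznorm]
      have hd := diag z hzball
      rw [hnsz] at hd
      have hKφ : Ks γ (normSq (φ z)) ≤ S :=
        Ks_le_S hpos hγsum (normSq_nonneg _) (hns _ (hφm hzball)).le
      have hKφpos : 0 < Ks γ (normSq (φ z)) :=
        hKpos _ (normSq_nonneg _) (hns _ (hφm hzball)).le
      have hnsF : Ks γ (r^2) / S ≤ normSq (F z) := by
        rw [div_le_iff₀ (by linarith)]
        calc Ks γ (r^2) = normSq (F z) * Ks γ (normSq (φ z)) := hd.symm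
          _ ≤ normSq (F z) * S := mul_le_mul_of_nonneg_left hKφ (normSq_nonneg _)
      have hgz2 : ‖g z‖^2 ≤ S / Ks γ (r^2) := by
        rw [hgnorm z hzball]
        rw [inv_le_comm₀ (by
          have : 0 < Ks γ (r^2) / S := div_pos hKrpos (by linarith)
          linarith [lt_of_lt_of_le this hnsF]) (by positivity)]
        rw [inv_div]
        exact hnsF
      rw [hCdef]
      rw [show ‖g z‖ = Real.sqrt (‖g z‖^2) by rw [Real.sqrt_sq (norm_nonneg _)]]
      exact Real.sqrt_le_sqrt hgz2
    -- maximum modulus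
    have hg0le : ‖g 0‖ ≤ C := by
      have hU : Bornology.IsBounded (ball (0:ℂ) r) := isBounded_ball
      have hcl : closure (ball (0:ℂ) r) = closedBall (0:ℂ) r := closure_ball 0 hr0.ne'
      have hdc : DiffContOnCl ℂ g (ball (0:ℂ) r) := by
        constructor
        · exact hg.mono (ball_subset_ball hr1.le)
        · rw [hcl]
          exact hg.continuousOn.mono (closedBall_subset_ball hr1)
      have hfr : ∀ z ∈ frontier (ball (0:ℂ) r), ‖g z‖ ≤ C := by
        rw [frontier_ball 0 hr0.ne']
        exact hsphere
      exact Complex.norm_le_of_forall_mem_frontier_norm_le hU hdc hfr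
        (subset_closure (mem_ball_self hr0))
    have hg02 : ‖g 0‖^2 ≤ S / Ks γ (r^2) := by
      have hC0 : 0 ≤ S / Ks γ (r^2) := by positivity
      calc ‖g 0‖^2 ≤ C^2 := by
            apply pow_le_pow_left₀ (norm_nonneg _) hg0le
        _ = S / Ks γ (r^2) := Real.sq_sqrt hC0
    have h0ball : (0:ℂ) ∈ ball (0:ℂ) 1 := mem_ball_self one_pos
    rw [hgnorm 0 h0ball] at hg02
    have hFn0 : 0 < normSq (F 0) := by
      rcases (normSq_nonneg (F 0)).lt_or_eq with h | h
      · exact h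
      · exact absurd (normSq_eq_zero.1 h.symm) (hFne 0 h0ball)
    rw [inv_le_comm₀ hFn0 (by positivity)] at hg02
    rw [inv_div] at hg02
    calc c ≤ Ks γ (r^2) := hKr.le
      _ ≤ S * normSq (F 0) := by
          rw [div_le_iff₀ (by linarith)] at hg02
          linarith [hg02]
  have hF0ge : 1 ≤ normSq (F 0) := by
    by_contra hq
    push_neg at hq
    set q := normSq (F 0) with hqdef
    have hq0 : 0 ≤ q := normSq_nonneg _
    have hc := claim (S * (q+1)/2) (by nlinarith) (by nlinarith)
    nlinarith
  have h0ball : (0:ℂ) ∈ ball (0:ℂ) 1 := mem_ball_self one_pos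
  -- φ 0 = 0 and normSq (F 0) = 1
  have hdiag0 := diag 0 h0ball
  rw [show normSq (0:ℂ) = 0 by simp, Ks_zero hγ0] at hdiag0
  have hKφ0ge : 1 ≤ Ks γ (normSq (φ 0)) :=
    Ks_one_le hpos hγsum hγ0 (normSq_nonneg _) (hns _ (hφm h0ball)).le
  have hKφ0 : Ks γ (normSq (φ 0)) = 1 := by nlinarith
  have hφ0 : φ 0 = 0 := by
    rw [← normSq_eq_zero]
    by_contra h
    have hpos0 : 0 < normSq (φ 0) := (normSq_nonneg _).lt_of_ne (Ne.symm h)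
    have := Ks_strict hpos hγsum (le_refl (0:ℝ)) hpos0 (hns _ (hφm h0ball)).le
    rw [Ks_zero hγ0, hKφ0] at this
    exact lt_irrefl _ this
  have hF0n : normSq (F 0) = 1 := by
    rw [hKφ0] at hdiag0; linarith
  -- Schwarz inequality
  have hφm' : Set.MapsTo φ (ball (0:ℂ) 1) (ball (φ 0) 1) := by rwa [hφ0]
  have hSch : ∀ z ∈ ball (0:ℂ) 1, ‖φ z‖ ≤ ‖z‖ := by
    intro z hz
    have := Complex.dist_le_div_mul_dist_of_mapsTo_ball hφd (hφm'.mono_right ball_subset_closedBall) hz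
    rw [hφ0] at this
    simpa [dist_zero_right] using this
  -- g attains max modulus at 0, hence F is constant
  have hnsle : ∀ z ∈ ball (0:ℂ) 1, normSq (φ z) ≤ normSq z := by
    intro z hz
    rw [Complex.normSq_eq_norm_sq, Complex.normSq_eq_norm_sq]
    exact pow_le_pow_left₀ (norm_nonneg _) (hSch z hz) 2
  have hFge1 : ∀ z ∈ ball (0:ℂ) 1, 1 ≤ normSq (F z) := by
    intro z hz
    have hd := diag z hz
    have hKle : Ks γ (normSq (φ z)) ≤ Ks γ (normSq z) :=
      Ks_mono hpos hγsum (normSq_nonneg _) (hnsle z hz) (hns z hz).le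
    have hKpos' : 0 < Ks γ (normSq (φ z)) :=
      hKpos _ (normSq_nonneg _) (hns _ (hφm hz)).le
    nlinarith
  have hgle1 : ∀ z ∈ ball (0:ℂ) 1, ‖g z‖ ≤ 1 := by
    intro z hz
    have h2 : ‖g z‖^2 ≤ 1 := by
      rw [hgnorm z hz]
      rw [inv_le_one_iff₀]
      right; exact hFge1 z hz
    nlinarith [norm_nonneg (g z)]
  have hg0n : ‖g 0‖ = 1 := by
    have h2 : ‖g 0‖^2 = 1 := by rw [hgnorm 0 h0ball, hF0n]; norm_num
    nlinarith [norm_nonneg (g 0)]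
  have hmax : IsMaxOn (norm ∘ g) (ball (0:ℂ) 1) 0 := by
    intro z hz
    simp only [Function.comp_apply, hg0n]
    exact hgle1 z hz
  have hgconst := Complex.eqOn_of_isPreconnected_of_isMaxOn_norm
    (convex_ball (0:ℂ) 1).isPreconnected isOpen_ball hg h0ball hmax
  have hFconst : ∀ z ∈ ball (0:ℂ) 1, F z = F 0 := by
    intro z hz
    have h1 : g z = g 0 := hgconst hz
    have : (F z)⁻¹ = (F 0)⁻¹ := h1
    rw [← inv_inv (F z), this, inv_inv]
  have habsF0 : ‖F 0‖ = 1 := by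
    have h1 : ‖F 0‖ ^ 2 = 1 := by rw [Complex.sq_norm, hF0n]
    nlinarith [norm_nonneg (F 0)]
  -- |φ z| = |z|
  have hnseq : ∀ z ∈ ball (0:ℂ) 1, normSq (φ z) = normSq z := by
    intro z hz
    have hd := diag z hz
    rw [hFconst z hz, hF0n, one_mul] at hd
    by_contra h
    rcases lt_or_gt_of_ne h with h' | h'
    · have := Ks_strict hpos hγsum (normSq_nonneg _) h' (hns z hz).le
      rw [hd] at this; exact lt_irrefl _ this
    · have := Ks_strict hpos hγsum (normSq_nonneg _) h' (hns _ (hφm hz)).le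
      rw [hd] at this; exact lt_irrefl _ this
  have hnorm_eq : ∀ z ∈ ball (0:ℂ) 1, ‖φ z‖ = ‖z‖ := by
    intro z hz
    have h := hnseq z hz
    rw [Complex.normSq_eq_norm_sq, Complex.normSq_eq_norm_sq] at h
    have h1 : ‖φ z‖ = ‖z‖ := by
      nlinarith [norm_nonneg (φ z), norm_nonneg z]
    exact h1
  -- the rotation
  set h : ℂ → ℂ := dslope φ 0 with hhdef
  have hhd : DifferentiableOn ℂ h (ball (0:ℂ) 1) :=
    (differentiableOn_dslope (isOpen_ball.mem_nhds h0ball)).mpr hφd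
  have hhval : ∀ z ∈ ball (0:ℂ) 1, z ≠ 0 → h z = z⁻¹ * φ z := by
    intro z _ hz0
    rw [hhdef, dslope_of_ne φ hz0, slope_def_field, hφ0]
    simp [div_eq_inv_mul]
  have hhnorm1 : ∀ z ∈ ball (0:ℂ) 1, z ≠ 0 → ‖h z‖ = 1 := by
    intro z hz hz0
    rw [hhval z hz hz0, norm_mul, norm_inv, hnorm_eq z hz]
    rw [inv_mul_cancel₀ (by simpa using hz0)]
  have hh0 : ‖h 0‖ ≤ 1 := by
    rw [hhdef, dslope_same]
    have := Complex.norm_deriv_le_div_of_mapsTo_ball hφd (hφm'.mono_right ball_subset_closedBall) one_pos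
    simpa using this
  have hz₀mem : (1/2 : ℂ) ∈ ball (0:ℂ) 1 := by
    rw [mem_ball_zero_iff]
    rw [show (1/2:ℂ) = ((1/2:ℝ):ℂ) by norm_num, Complex.norm_real]
    norm_num
  have hz₀ne : (1/2 : ℂ) ≠ 0 := by norm_num
  have hmax2 : IsMaxOn (norm ∘ h) (ball (0:ℂ) 1) (1/2 : ℂ) := by
    intro z hz
    simp only [Function.comp_apply, hhnorm1 _ hz₀mem hz₀ne]
    rcases eq_or_ne z 0 with rfl | hz0
    · exact hh0
    · exact (hhnorm1 z hz hz0).le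
  have hhconst := Complex.eqOn_of_isPreconnected_of_isMaxOn_norm
    (convex_ball (0:ℂ) 1).isPreconnected isOpen_ball hhd hz₀mem hmax2
  refine ⟨⟨F 0, habsF0, hFconst⟩, ⟨h (1/2 : ℂ), ?_, ?_⟩⟩
  · exact hhnorm1 _ hz₀mem hz₀ne
  · intro z hz
    rcases eq_or_ne z 0 with rfl | hz0
    · rw [hφ0, mul_zero]
    · have h1 : h z = h (1/2 : ℂ) := hhconst hz
      rw [hhval z hz hz0] at h1
      have h2 : φ z = z * h (1/2 : ℂ) := by
        rw [← h1]
        field_simp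
      rw [h2]; ring
end
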